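/- Let (Y,T) be a 3-equivalenced association scheme. For all u, v ∈ T ∖ {1_Y} with u ≠ v*, exactly one of the following holds: (i) there are three pairwise distinct w₁, w₂, w₃ ∈ T ∖ {1_Y} with σ_u σ_v = σ_{w₁} + σ_{w₂} + σ_{w₃}; or (ii) there are two distinct w₁, w₂ ∈ T ∖ {1_Y} with σ_u σ_v = σ_{w₁} + 2 σ_{w₂}. -/

import Mathlib

open Matrix BigOperators Kronecker
open scoped Classical

section Defs

variable {Z : Type*} [Fintype Z] [DecidableEq Z]

/-- The identity (diagonal) relation on `Z`. -/
def diagRel (Z : Type*) [Fintype Z] [DecidableEq Z] : Finset (Z × Z) :=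
  Finset.univ.filter fun p => p.1 = p.2

/-- The converse relation. -/
def convRel (s : Finset (Z × Z)) : Finset (Z × Z) := s.image fun p => (p.2, p.1)

/-- The intersection number `p_{st}^u`, computed at an arbitrary pair of `u`. -/
noncomputable def pNum (s t u : Finset (Z × Z)) : ℕ :=
  if h : u.Nonempty then
    (Finset.univ.filter fun z => (h.choose.1, z) ∈ s ∧ (z, h.choose.2) ∈ t).card
  else 0

/-- The valency `n_s = p_{s s*}^{1}`. -/
noncomputable def valency (s : Finset (Z × Z)) : ℕ := pNum s (convRel s) (diagRel Z)

/-- The adjacency matrix of a relation. -/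
def adjMat (s : Finset (Z × Z)) : Matrix Z Z ℂ :=
  Matrix.of fun x y => if (x, y) ∈ s then 1 else 0

/-- The diagonal 0/1 matrix of a subset. -/
def eps (U : Finset Z) : Matrix Z Z ℂ := Matrix.diagonal fun i => if i ∈ U then 1 else 0

/-- The all-ones matrix. -/
def allOnes (Z : Type*) : Matrix Z Z ℂ := Matrix.of fun _ _ => 1

/-- `pointFiber x s = xs = {y : (x,y) ∈ s}`. -/
def pointFiber (x : Z) (s : Finset (Z × Z)) : Finset Z :=
  Finset.univ.filter fun y => (x, y) ∈ s

/-- An association scheme on a finite set `Z`: a partition of `Z × Z` into nonempty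
relations containing the identity relation, closed under converse, and with
well-defined intersection numbers. -/
structure AssocScheme (Z : Type*) [Fintype Z] [DecidableEq Z] where
  rels : Finset (Finset (Z × Z))
  nonempty_mem : ∀ s ∈ rels, s.Nonempty
  cover : ∀ p : Z × Z, ∃ s ∈ rels, p ∈ s
  pairwise_disjoint : ∀ s ∈ rels, ∀ t ∈ rels, s ≠ t → Disjoint s t
  id_mem : diagRel Z ∈ rels
  conv_mem : ∀ s ∈ rels, convRel s ∈ rels
  pconst : ∀ s ∈ rels, ∀ t ∈ rels, ∀ u ∈ rels, ∀ p ∈ u, ∀ q ∈ u,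
    (Finset.univ.filter fun z => (p.1, z) ∈ s ∧ (z, p.2) ∈ t).card =
    (Finset.univ.filter fun z => (q.1, z) ∈ s ∧ (z, q.2) ∈ t).card

/-- A scheme is 3-equivalenced when it has more than one point and every
non-identity basic relation has valency 3. -/
def ThreeEquivalenced (B : AssocScheme Z) : Prop :=
  1 < Fintype.card Z ∧ ∀ t ∈ B.rels, t ≠ diagRel Z → valency t = 3

/-- A scheme is k-equivalenced when it has more than one point and every
non-identity basic relation has valency k. -/
def KEquivalenced (B : AssocScheme Z) (k : ℕ) : Prop :=
  1 < Fintype.card Z ∧ ∀ t ∈ B.rels, t ≠ diagRel Z → valency t = k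

/-- A scheme is imprimitive if some union of basic relations is an equivalence
relation different from the identity relation and from the full relation. -/
def Imprimitive (B : AssocScheme Z) : Prop :=
  ∃ R ⊆ B.rels, Equivalence (fun x y : Z => (x, y) ∈ R.sup id) ∧
    R.sup id ≠ diagRel Z ∧ R.sup id ≠ Finset.univ

/-- A coherent algebra: a subalgebra of the matrix algebra containing the all-ones
matrix (and the identity), closed under conjugate transpose and Hadamard product. -/
def IsCoherent (𝒜 : Subalgebra ℂ (Matrix Z Z ℂ)) : Prop :=
  allOnes Z ∈ 𝒜 ∧ (∀ M ∈ 𝒜, Mᴴ ∈ 𝒜) ∧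
  ∀ M ∈ 𝒜, ∀ N ∈ 𝒜, Matrix.hadamard M N ∈ 𝒜

/-- The one-point-extension algebra: the smallest coherent algebra containing all
adjacency matrices of the scheme and the diagonal matrix unit at `x`. -/
noncomputable def onePointAlg (B : AssocScheme Z) (x : Z) : Subalgebra ℂ (Matrix Z Z ℂ) :=
  sInf {𝒜 | IsCoherent 𝒜 ∧ (∀ s ∈ B.rels, adjMat s ∈ 𝒜) ∧ eps {x} ∈ 𝒜}

/-- A matrix has only 0/1 entries. -/
def IsZeroOne (M : Matrix Z Z ℂ) : Prop := ∀ i j, M i j = 0 ∨ M i j = 1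

/-- A basic relation matrix of a coherent algebra: a nonzero 0/1 matrix in the
algebra whose only 0/1 minorants in the algebra are 0 and itself. -/
def IsBasicMatrix (𝒜 : Subalgebra ℂ (Matrix Z Z ℂ)) (B : Matrix Z Z ℂ) : Prop :=
  B ∈ 𝒜 ∧ IsZeroOne B ∧ B ≠ 0 ∧
  ∀ C ∈ 𝒜, IsZeroOne C → (∀ i j, C i j = 1 → B i j = 1) → C = 0 ∨ C = B

/-- The Terwilliger algebra of a scheme with respect to the base point `x`. -/
noncomputable def terwAlg (B : AssocScheme Z) (x : Z) : Subalgebra ℂ (Matrix Z Z ℂ) :=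
  Algebra.adjoin ℂ
    ({M | ∃ s ∈ B.rels, M = adjMat s} ∪ {M | ∃ s ∈ B.rels, M = eps (pointFiber x s)})

/-- A central primitive idempotent of a (set underlying a) matrix algebra: a nonzero
central idempotent that is not the sum of two nonzero orthogonal central idempotents. -/
def IsCPI {n : Type*} [Fintype n] [DecidableEq n] (𝒜 : Set (Matrix n n ℂ))
    (e : Matrix n n ℂ) : Prop :=
  e ∈ 𝒜 ∧ e ≠ 0 ∧ e * e = e ∧ (∀ a ∈ 𝒜, a * e = e * a) ∧
  ¬∃ f g : Matrix n n ℂ, f ∈ 𝒜 ∧ g ∈ 𝒜 ∧ f ≠ 0 ∧ g ≠ 0 ∧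
    f * f = f ∧ g * g = g ∧ (∀ a ∈ 𝒜, a * f = f * a) ∧ (∀ a ∈ 𝒜, a * g = g * a) ∧
    f * g = 0 ∧ g * f = 0 ∧ e = f + g

/-- The trivial central primitive idempotent
`∑_{s∈S} n_s⁻¹ ε_{x s} J ε_{x s}` of the Terwilliger algebra. -/
noncomputable def trivTerwIdem (B : AssocScheme Z) (x : Z) : Matrix Z Z ℂ :=
  ∑ s ∈ B.rels, ((valency s : ℂ)⁻¹) •
    (eps (pointFiber x s) * allOnes Z * eps (pointFiber x s))

/-- The adjacency algebra `A(S) = span{σ_s : s ∈ S}` as a set of matrices. -/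
def adjAlgSet (B : AssocScheme Z) : Set (Matrix Z Z ℂ) :=
  ↑(Submodule.span ℂ {M | ∃ s ∈ B.rels, M = adjMat s})

end Defs

section Wreath

variable {X Y : Type*} [Fintype X] [DecidableEq X] [Fintype Y] [DecidableEq Y]

/-- Generators of the Terwilliger algebra of the wreath product at `(x₀, y₀)`. -/
def wreathGens (A : AssocScheme X) (B : AssocScheme Y) (x₀ : X) (y₀ : Y) :
    Set (Matrix (X × Y) (X × Y) ℂ) :=
  {M | ∃ s ∈ A.rels, M = adjMat s ⊗ₖ (1 : Matrix Y Y ℂ)} ∪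
  {M | ∃ s ∈ A.rels, M = eps (pointFiber x₀ s) ⊗ₖ eps ({y₀} : Finset Y)} ∪
  {M | ∃ t ∈ B.rels, t ≠ diagRel Y ∧ M = allOnes X ⊗ₖ adjMat t} ∪
  {M | ∃ t ∈ B.rels, t ≠ diagRel Y ∧ M = (1 : Matrix X X ℂ) ⊗ₖ eps (pointFiber y₀ t)}

/-- The Terwilliger algebra of the wreath product at `(x₀, y₀)`. -/
noncomputable def wreathTerw (A : AssocScheme X) (B : AssocScheme Y) (x₀ : X) (y₀ : Y) :
    Subalgebra ℂ (Matrix (X × Y) (X × Y) ℂ) :=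
  Algebra.adjoin ℂ (wreathGens A B x₀ y₀)

/-- The relation `s̃` of the wreath product coming from `s ∈ S`. -/
def tildeRel (s : Finset (X × X)) : Finset ((X × Y) × (X × Y)) :=
  Finset.univ.filter fun p => (p.1.1, p.2.1) ∈ s ∧ p.1.2 = p.2.2

/-- The relation `t̄` of the wreath product coming from `t ∈ T \ {1}`. -/
def barRel (t : Finset (Y × Y)) : Finset ((X × Y) × (X × Y)) :=
  Finset.univ.filter fun p => (p.1.2, p.2.2) ∈ t

/-- The basic relations of the wreath product `S ≀ T`. -/
def wreathRels (A : AssocScheme X) (B : AssocScheme Y) :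
    Finset (Finset ((X × Y) × (X × Y))) :=
  A.rels.image (tildeRel (Y := Y)) ∪ (B.rels.erase (diagRel Y)).image (barRel (X := X))

/-- The trivial central primitive idempotent
`e₀ = ∑_u n_u⁻¹ ε_{(x₀,y₀)u} J ε_{(x₀,y₀)u}` of `T(S ≀ T)`. -/
noncomputable def wreathTriv (A : AssocScheme X) (B : AssocScheme Y) (x₀ : X) (y₀ : Y) :
    Matrix (X × Y) (X × Y) ℂ :=
  ∑ u ∈ wreathRels A B, ((valency u : ℂ)⁻¹) •
    (eps (pointFiber (x₀, y₀) u) * allOnes (X × Y) * eps (pointFiber (x₀, y₀) u))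

/-- `ω = e^{2πi/3}`. -/
noncomputable def omega3 : ℂ := Complex.exp (2 * Real.pi * Complex.I / 3)

/-- The shifted matching matrix `∑_i E_{y_{t(i)}, y_{t'(i+k)}}` on `y₀t × y₀t'`. -/
noncomputable def cyc (enum : Finset (Y × Y) → Fin 3 → Y) (t t' : Finset (Y × Y))
    (k : Fin 3) : Matrix Y Y ℂ :=
  ∑ i : Fin 3, Matrix.single (enum t i) (enum t' (i + k)) 1

/-- `G_{y₀t, y₀t'}`. -/
noncomputable def Gmat (X : Type*) [Fintype X] (enum : Finset (Y × Y) → Fin 3 → Y)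
    (t t' : Finset (Y × Y)) : Matrix (X × Y) (X × Y) ℂ :=
  ((3 * (Fintype.card X : ℂ))⁻¹) •
    (allOnes X ⊗ₖ (cyc enum t t' 0 + omega3 • cyc enum t t' 1 + omega3 ^ 2 • cyc enum t t' 2))

/-- `G'_{y₀t, y₀t'}`. -/
noncomputable def Gmat' (X : Type*) [Fintype X] (enum : Finset (Y × Y) → Fin 3 → Y)
    (t t' : Finset (Y × Y)) : Matrix (X × Y) (X × Y) ℂ :=
  ((3 * (Fintype.card X : ℂ))⁻¹) •
    (allOnes X ⊗ₖ (cyc enum t t' 0 + omega3 ^ 2 • cyc enum t t' 1 + omega3 • cyc enum t t' 2))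

/-- `enum` enumerates each set `y₀t` (for non-identity `t`) by `Fin 3`. -/
def IsEnum (B : AssocScheme Y) (y₀ : Y) (enum : Finset (Y × Y) → Fin 3 → Y) : Prop :=
  ∀ t ∈ B.rels, t ≠ diagRel Y →
    Function.Injective (enum t) ∧ ∀ y, y ∈ pointFiber y₀ t ↔ ∃ i, enum t i = y

/-- The enumerations are well-ordering: every basic relation matrix of the
one-point-extension algebra which is nonzero on `y₀t × y₀t'` restricts there to one of
the cyclic permutation matrices `I, C, C²`. -/
def IsWellOrdering (B : AssocScheme Y) (y₀ : Y) (enum : Finset (Y × Y) → Fin 3 → Y) : Prop :=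
  IsEnum B y₀ enum ∧
  ∀ t ∈ B.rels, t ≠ diagRel Y → ∀ t' ∈ B.rels, t' ≠ diagRel Y →
    ∀ M : Matrix Y Y ℂ, IsBasicMatrix (onePointAlg B y₀) M →
      (∃ i j : Fin 3, M (enum t i) (enum t' j) ≠ 0) →
      ∃ k : Fin 3, ∀ i j : Fin 3,
        M (enum t i) (enum t' j) = if j = i + k then 1 else 0

/-- The set of all matrices `G_{y₀t, y₀t'}`, `t, t' ∈ T₃`. -/
noncomputable def GmatSet (X : Type*) [Fintype X] (B : AssocScheme Y)
    (enum : Finset (Y × Y) → Fin 3 → Y) : Set (Matrix (X × Y) (X × Y) ℂ) :=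
  {M | ∃ t ∈ B.rels.erase (diagRel Y), ∃ t' ∈ B.rels.erase (diagRel Y), M = Gmat X enum t t'}

/-- The set of all matrices `G'_{y₀t, y₀t'}`, `t, t' ∈ T₃`. -/
noncomputable def GmatSet' (X : Type*) [Fintype X] (B : AssocScheme Y)
    (enum : Finset (Y × Y) → Fin 3 → Y) : Set (Matrix (X × Y) (X × Y) ℂ) :=
  {M | ∃ t ∈ B.rels.erase (diagRel Y), ∃ t' ∈ B.rels.erase (diagRel Y), M = Gmat' X enum t t'}

/-- `e_{η1} = ∑_{t ∈ T₃} G_{y₀t, y₀t}`. -/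
noncomputable def etaOne (X : Type*) [Fintype X] (B : AssocScheme Y)
    (enum : Finset (Y × Y) → Fin 3 → Y) : Matrix (X × Y) (X × Y) ℂ :=
  ∑ t ∈ B.rels.erase (diagRel Y), Gmat X enum t t

/-- `e_{η2} = ∑_{t ∈ T₃} G'_{y₀t, y₀t}`. -/
noncomputable def etaTwo (X : Type*) [Fintype X] (B : AssocScheme Y)
    (enum : Finset (Y × Y) → Fin 3 → Y) : Matrix (X × Y) (X × Y) ℂ :=
  ∑ t ∈ B.rels.erase (diagRel Y), Gmat' X enum t t

end Wreath

section MyAux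
variable {Y : Type*} [Fintype Y] [DecidableEq Y]

lemma mem_diagRel {a b : Y} : (a, b) ∈ diagRel Y ↔ a = b := by
  simp [diagRel]

lemma mem_convRel {s : Finset (Y × Y)} {a b : Y} : (a, b) ∈ convRel s ↔ (b, a) ∈ s := by
  constructor
  · intro h
    obtain ⟨p, hp, hpe⟩ := Finset.mem_image.mp h
    obtain ⟨h1, h2⟩ := Prod.mk.injEq .. ▸ hpe
    simpa [← h1, ← h2] using hp
  · intro h
    exact Finset.mem_image.mpr ⟨(b, a), h, rfl⟩

lemma convRel_convRel (s : Finset (Y × Y)) : convRel (convRel s) = s := by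
  ext ⟨a, b⟩; simp [mem_convRel]

lemma convRel_diagRel : convRel (diagRel Y) = diagRel Y := by
  ext ⟨a, b⟩; simp [mem_convRel, mem_diagRel, eq_comm]

lemma rel_unique (B : AssocScheme Y) {s t : Finset (Y × Y)} (hs : s ∈ B.rels)
    (ht : t ∈ B.rels) {p : Y × Y} (hps : p ∈ s) (hpt : p ∈ t) : s = t := by
  by_contra h
  exact Finset.disjoint_left.mp (B.pairwise_disjoint s hs t ht h) hps hpt

lemma convRel_ne_diag {v : Finset (Y × Y)} (hv : v ≠ diagRel Y) :
    convRel v ≠ diagRel Y := by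
  intro h
  apply hv
  rw [← convRel_convRel v, h, convRel_diagRel]

/-- pNum is computed by counting at any pair of u. -/
lemma pNum_eq (B : AssocScheme Y) {s t w : Finset (Y × Y)} (hs : s ∈ B.rels)
    (ht : t ∈ B.rels) (hw : w ∈ B.rels) {p : Y × Y} (hp : p ∈ w) :
    pNum s t w = (Finset.univ.filter fun z => (p.1, z) ∈ s ∧ (z, p.2) ∈ t).card := by
  have hne : w.Nonempty := ⟨p, hp⟩
  rw [pNum, dif_pos hne]
  exact B.pconst s hs t ht w hw hne.choose hne.choose_spec p hp

/-- The fiber of any point under a relation has card = valency. -/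
lemma fiber_card (B : AssocScheme Y) {s : Finset (Y × Y)} (hs : s ∈ B.rels) (y : Y) :
    (pointFiber y s).card = valency s := by
  have hconv := B.conv_mem s hs
  have hyy : (y, y) ∈ diagRel Y := mem_diagRel.mpr rfl
  rw [valency, pNum_eq B hs hconv B.id_mem hyy]
  congr 1
  ext z
  simp only [pointFiber, Finset.mem_filter, Finset.mem_univ, true_and, mem_convRel]
  tauto

lemma fiber_card_three (B : AssocScheme Y) (h3 : ThreeEquivalenced B)
    {s : Finset (Y × Y)} (hs : s ∈ B.rels) (hs1 : s ≠ diagRel Y) (y : Y) :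
    (pointFiber y s).card = 3 := by
  rw [fiber_card B hs]; exact h3.2 s hs hs1

lemma pointFiber_diag (y : Y) : pointFiber y (diagRel Y) = {y} := by
  ext z; simp [pointFiber, mem_diagRel, eq_comm]

end MyAux

section MyAux2
set_option linter.unusedSectionVars false
variable {Y : Type*} [Fintype Y] [DecidableEq Y]

lemma adjMat_mul_apply (u v : Finset (Y × Y)) (y y' : Y) :
    (adjMat u * adjMat v) y y' =
    ((Finset.univ.filter fun z => (y, z) ∈ u ∧ (z, y') ∈ v).card : ℂ) := by
  rw [Matrix.mul_apply, Finset.card_filter]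
  push_cast
  apply Finset.sum_congr rfl
  intro z _
  simp only [adjMat, Matrix.of_apply]
  split_ifs with h1 h2 h3 <;> simp_all

lemma adjMat_mul_decomp (B : AssocScheme Y) {u v : Finset (Y × Y)}
    (hu : u ∈ B.rels) (hv : v ∈ B.rels) :
    adjMat u * adjMat v = ∑ w ∈ B.rels, (pNum u v w : ℂ) • adjMat w := by
  ext y y'
  obtain ⟨w, hw, hpw⟩ := B.cover (y, y')
  rw [adjMat_mul_apply, ← pNum_eq B hu hv hw hpw, Matrix.sum_apply]
  rw [Finset.sum_eq_single w]
  · simp [adjMat, hpw]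
  · intro w' hw' hne
    have : (y, y') ∉ w' := fun h => hne (rel_unique B hw' hw h hpw)
    simp [adjMat, this]
  · intro h; exact absurd hw h

/-- The global double count: 9 paths from any point. -/
lemma double_count (B : AssocScheme Y) (h3 : ThreeEquivalenced B) {u v : Finset (Y × Y)}
    (hu : u ∈ B.rels) (hv : v ∈ B.rels) (hu1 : u ≠ diagRel Y) (hv1 : v ≠ diagRel Y)
    (y : Y) :
    ∑ b : Y, (Finset.univ.filter fun z => (y, z) ∈ u ∧ (z, b) ∈ v).card = 9 := by
  have h1 : ∀ b : Y, (Finset.univ.filter fun z => (y, z) ∈ u ∧ (z, b) ∈ v).card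
      = ∑ z : Y, if (y, z) ∈ u ∧ (z, b) ∈ v then 1 else 0 := by
    intro b; rw [Finset.card_filter]
  simp_rw [h1]
  rw [Finset.sum_comm]
  have h2 : ∀ z : Y, (∑ b : Y, if (y, z) ∈ u ∧ (z, b) ∈ v then 1 else 0)
      = if (y, z) ∈ u then 3 else 0 := by
    intro z
    by_cases hz : (y, z) ∈ u
    · simp only [hz, true_and, if_true]
      have := fiber_card_three B h3 hv hv1 z
      rw [← this, pointFiber, Finset.card_filter]
    · simp [hz]
  simp_rw [h2]
  rw [Finset.sum_ite, Finset.sum_const_zero, add_zero, Finset.sum_const, smul_eq_mul]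
  have : (Finset.univ.filter fun z => (y, z) ∈ u) = pointFiber y u := rfl
  rw [this, fiber_card_three B h3 hu hu1 y]

/-- The valency-weighted sum of intersection numbers. -/
lemma sum_pNum_mul (B : AssocScheme Y) (h3 : ThreeEquivalenced B) {u v : Finset (Y × Y)}
    (hu : u ∈ B.rels) (hv : v ∈ B.rels) (hu1 : u ≠ diagRel Y) (hv1 : v ≠ diagRel Y)
    (y : Y) :
    ∑ w ∈ B.rels, pNum u v w * (pointFiber y w).card = 9 := by
  have hbi : B.rels.biUnion (fun w => pointFiber y w) = Finset.univ := by
    ext b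
    simp only [Finset.mem_biUnion, Finset.mem_univ, iff_true]
    obtain ⟨w, hw, hpw⟩ := B.cover (y, b)
    exact ⟨w, hw, by simp [pointFiber, hpw]⟩
  have hdisj : (B.rels : Set (Finset (Y × Y))).PairwiseDisjoint (fun w => pointFiber y w) := by
    intro w1 hw1 w2 hw2 hne
    simp only [Function.onFun]
    rw [Finset.disjoint_left]
    intro b hb1 hb2
    exact hne (rel_unique B hw1 hw2 (Finset.mem_filter.mp hb1).2 (Finset.mem_filter.mp hb2).2)
  calc ∑ w ∈ B.rels, pNum u v w * (pointFiber y w).card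
      = ∑ w ∈ B.rels, ∑ b ∈ pointFiber y w,
          (Finset.univ.filter fun z => (y, z) ∈ u ∧ (z, b) ∈ v).card := by
        apply Finset.sum_congr rfl
        intro w hw
        have hc : ∀ b ∈ pointFiber y w,
            (Finset.univ.filter fun z => (y, z) ∈ u ∧ (z, b) ∈ v).card = pNum u v w := by
          intro b hb
          exact (pNum_eq B hu hv hw (Finset.mem_filter.mp hb).2).symm
        rw [Finset.sum_congr rfl hc, Finset.sum_const, smul_eq_mul, mul_comm]
    _ = ∑ b ∈ B.rels.biUnion (fun w => pointFiber y w),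
          (Finset.univ.filter fun z => (y, z) ∈ u ∧ (z, b) ∈ v).card :=
        (Finset.sum_biUnion hdisj).symm
    _ = 9 := by rw [hbi]; exact double_count B h3 hu hv hu1 hv1 y

lemma pNum_diag_zero (B : AssocScheme Y) (h3 : ThreeEquivalenced B) {u v : Finset (Y × Y)}
    (hu : u ∈ B.rels) (hv : v ∈ B.rels) (huv : u ≠ convRel v) :
    pNum u v (diagRel Y) = 0 := by
  have hpos : Nonempty Y := Fintype.card_pos_iff.mp (by have := h3.1; omega)
  obtain ⟨y⟩ := hpos
  rw [pNum_eq B hu hv B.id_mem (show (y, y) ∈ diagRel Y from mem_diagRel.mpr rfl)]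
  rw [Finset.card_eq_zero, Finset.filter_eq_empty_iff]
  rintro z - ⟨hzu, hzv⟩
  have hconv : (y, z) ∈ convRel v := mem_convRel.mpr hzv
  exact huv (rel_unique B hu (B.conv_mem v hv) hzu hconv)

end MyAux2

section MyAux3
set_option linter.unusedSectionVars false
variable {Y : Type*} [Fintype Y] [DecidableEq Y]

lemma pNum_ne_three (B : AssocScheme Y) (h3 : ThreeEquivalenced B)
    {u v w : Finset (Y × Y)} (hu : u ∈ B.rels) (hv : v ∈ B.rels) (hw : w ∈ B.rels)
    (hu1 : u ≠ diagRel Y) (hv1 : v ≠ diagRel Y) (hw1 : w ≠ diagRel Y) :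
    pNum u v w ≠ 3 := by
  intro hp3
  obtain ⟨⟨y, y'⟩, hyy'⟩ := B.nonempty_mem w hw
  -- Step 1: every z ∈ yu is v-related to every y'' ∈ yw
  have step1 : ∀ y'' ∈ pointFiber y w, ∀ z ∈ pointFiber y u, (z, y'') ∈ v := by
    intro y'' hy'' z hz
    have hy''w : (y, y'') ∈ w := (Finset.mem_filter.mp hy'').2
    have hcard : (Finset.univ.filter fun x => (y, x) ∈ u ∧ (x, y'') ∈ v).card = 3 := by
      have h : pNum u v w
          = (Finset.univ.filter fun x => (y, x) ∈ u ∧ (x, y'') ∈ v).card :=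
        pNum_eq B hu hv hw hy''w
      rw [← h, hp3]
    have hsub : (Finset.univ.filter fun x => (y, x) ∈ u ∧ (x, y'') ∈ v) ⊆ pointFiber y u := by
      intro x hx
      simp only [pointFiber, Finset.mem_filter, Finset.mem_univ, true_and] at hx ⊢
      exact hx.1
    have heq := Finset.eq_of_subset_of_card_le hsub
      (by rw [hcard, fiber_card_three B h3 hu hu1 y])
    rw [← heq] at hz
    exact (Finset.mem_filter.mp hz).2.2
  -- Step 2: two distinct points of yu
  have h2 : 1 < (pointFiber y u).card := by rw [fiber_card_three B h3 hu hu1 y]; norm_num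
  obtain ⟨z₁, hz₁, z₂, hz₂, hne⟩ := Finset.one_lt_card.mp h2
  -- Step 3: the relation c containing (z₁, z₂)
  obtain ⟨c, hc, hzc⟩ := B.cover (z₁, z₂)
  have hc1 : c ≠ diagRel Y := by
    intro h; rw [h] at hzc; exact hne (mem_diagRel.mp hzc)
  -- Step 4: for every b ∈ z₁c, the count is ≥ 3
  have hvconv : convRel v ∈ B.rels := B.conv_mem v hv
  have key : ∀ b ∈ pointFiber z₁ c,
      3 ≤ (Finset.univ.filter fun x => (z₁, x) ∈ v ∧ (x, b) ∈ convRel v).card := by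
    intro b hb
    have hbc : (z₁, b) ∈ c := (Finset.mem_filter.mp hb).2
    have e1 : pNum v (convRel v) c
        = (Finset.univ.filter fun x => (z₁, x) ∈ v ∧ (x, b) ∈ convRel v).card :=
      pNum_eq B hv hvconv hc hbc
    have e2 : pNum v (convRel v) c
        = (Finset.univ.filter fun x => (z₁, x) ∈ v ∧ (x, z₂) ∈ convRel v).card :=
      pNum_eq B hv hvconv hc hzc
    have hsub : pointFiber y w ⊆
        (Finset.univ.filter fun x => (z₁, x) ∈ v ∧ (x, z₂) ∈ convRel v) := by
      intro y'' hy''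
      simp only [Finset.mem_filter, Finset.mem_univ, true_and]
      exact ⟨step1 y'' hy'' z₁ hz₁, mem_convRel.mpr (step1 y'' hy'' z₂ hz₂)⟩
    have h3le := Finset.card_le_card hsub
    rw [fiber_card_three B h3 hw hw1 y] at h3le
    omega
  -- Step 5: global count is 9
  have hvconv1 : convRel v ≠ diagRel Y := convRel_ne_diag hv1
  have hglob := double_count B h3 hv hvconv hv1 hvconv1 z₁
  -- Step 6: contradiction 12 ≤ 9
  have hz₁notc : z₁ ∉ pointFiber z₁ c := by
    intro h
    have : (z₁, z₁) ∈ c := (Finset.mem_filter.mp h).2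
    exact hc1 (rel_unique B hc B.id_mem this (mem_diagRel.mpr rfl))
  have hfz₁ : (Finset.univ.filter fun x => (z₁, x) ∈ v ∧ (x, z₁) ∈ convRel v).card = 3 := by
    have : (Finset.univ.filter fun x => (z₁, x) ∈ v ∧ (x, z₁) ∈ convRel v)
        = pointFiber z₁ v := by
      ext x
      simp only [Finset.mem_filter, Finset.mem_univ, true_and, pointFiber, mem_convRel]
      tauto
    rw [this, fiber_card_three B h3 hv hv1 z₁]
  have hsum9 : 9 ≤ ∑ b ∈ pointFiber z₁ c,
      (Finset.univ.filter fun x => (z₁, x) ∈ v ∧ (x, b) ∈ convRel v).card := by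
    calc 9 = ∑ _b ∈ pointFiber z₁ c, 3 := by
            rw [Finset.sum_const, fiber_card_three B h3 hc hc1 z₁]
            norm_num
      _ ≤ _ := Finset.sum_le_sum key
  have hle : ∑ b ∈ insert z₁ (pointFiber z₁ c),
      (Finset.univ.filter fun x => (z₁, x) ∈ v ∧ (x, b) ∈ convRel v).card
      ≤ ∑ b : Y, (Finset.univ.filter fun x => (z₁, x) ∈ v ∧ (x, b) ∈ convRel v).card :=
    Finset.sum_le_sum_of_subset (Finset.subset_univ _)
  rw [Finset.sum_insert hz₁notc, hglob, hfz₁] at hle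
  omega

end MyAux3

section MyAux4
set_option linter.unusedSectionVars false
variable {Y : Type*} [Fintype Y] [DecidableEq Y]

/-- The two decomposition shapes are mutually exclusive. -/
lemma not_both_decomp (B : AssocScheme Y) {a b c d e : Finset (Y × Y)}
    (ha : a ∈ B.rels) (hb : b ∈ B.rels) (hc : c ∈ B.rels)
    (hd : d ∈ B.rels) (he : e ∈ B.rels)
    (hab : a ≠ b) (hac : a ≠ c) (hbc : b ≠ c) (hde : d ≠ e)
    (heq : adjMat a + adjMat b + adjMat c
      = adjMat d + (2 : ℂ) • adjMat e) : False := by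
  obtain ⟨⟨y, y'⟩, hye⟩ := B.nonempty_mem e he
  have hE : (adjMat a + adjMat b + adjMat c) y y'
      = (adjMat d + (2 : ℂ) • adjMat e) y y' := by rw [heq]
  have hyd : (y, y') ∉ d := fun h => hde (rel_unique B hd he h hye)
  simp only [Matrix.add_apply, Matrix.smul_apply, adjMat, Matrix.of_apply,
    if_pos hye, if_neg hyd, smul_eq_mul, mul_one, zero_add] at hE
  by_cases h1 : (y, y') ∈ a
  · by_cases h2 : (y, y') ∈ b
    · exact hab (rel_unique B ha hb h1 h2)
    · by_cases h3 : (y, y') ∈ c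
      · exact hac (rel_unique B ha hc h1 h3)
      · rw [if_pos h1, if_neg h2, if_neg h3] at hE; norm_num at hE
  · by_cases h2 : (y, y') ∈ b
    · by_cases h3 : (y, y') ∈ c
      · exact hbc (rel_unique B hb hc h2 h3)
      · rw [if_neg h1, if_pos h2, if_neg h3] at hE; norm_num at hE
    · by_cases h3 : (y, y') ∈ c
      · rw [if_neg h1, if_neg h2, if_pos h3] at hE; norm_num at hE
      · rw [if_neg h1, if_neg h2, if_neg h3] at hE; norm_num at hE

end MyAux4

section Statements

variable {X Y : Type*} [Fintype X] [DecidableEq X] [Fintype Y] [DecidableEq Y]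

theorem stmt2 (B : AssocScheme Y) (h3 : ThreeEquivalenced B)
    (u v : Finset (Y × Y)) (hu : u ∈ B.rels) (hv : v ∈ B.rels)
    (hu1 : u ≠ diagRel Y) (hv1 : v ≠ diagRel Y) (huv : u ≠ convRel v) :
    Xor'
      (∃ w₁ w₂ w₃ : Finset (Y × Y),
        (w₁ ∈ B.rels ∧ w₁ ≠ diagRel Y) ∧ (w₂ ∈ B.rels ∧ w₂ ≠ diagRel Y) ∧
        (w₃ ∈ B.rels ∧ w₃ ≠ diagRel Y) ∧ w₁ ≠ w₂ ∧ w₁ ≠ w₃ ∧ w₂ ≠ w₃ ∧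
        adjMat u * adjMat v = adjMat w₁ + adjMat w₂ + adjMat w₃)
      (∃ w₁ w₂ : Finset (Y × Y),
        (w₁ ∈ B.rels ∧ w₁ ≠ diagRel Y) ∧ (w₂ ∈ B.rels ∧ w₂ ≠ diagRel Y) ∧ w₁ ≠ w₂ ∧
        adjMat u * adjMat v = adjMat w₁ + (2 : ℂ) • adjMat w₂) := by
  classical
  have hpos : Nonempty Y := Fintype.card_pos_iff.mp (by have := h3.1; omega)
  obtain ⟨y⟩ := hpos
  set F := B.rels.erase (diagRel Y) with hF
  have hdmem : diagRel Y ∈ B.rels := B.id_mem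
  have hsum9 := sum_pNum_mul B h3 hu hv hu1 hv1 y
  have hsplit : ∑ w ∈ B.rels, pNum u v w * (pointFiber y w).card
      = pNum u v (diagRel Y) * (pointFiber y (diagRel Y)).card
        + ∑ w ∈ F, pNum u v w * (pointFiber y w).card :=
    (Finset.add_sum_erase _ _ hdmem).symm
  have hd0 : pNum u v (diagRel Y) = 0 := pNum_diag_zero B h3 hu hv huv
  have hF3 : ∀ w ∈ F, (pointFiber y w).card = 3 := fun w hw =>
    fiber_card_three B h3 (Finset.mem_of_mem_erase hw) (Finset.ne_of_mem_erase hw) y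
  have hsum3 : ∑ w ∈ F, pNum u v w = 3 := by
    have e : ∑ w ∈ F, pNum u v w * (pointFiber y w).card
        = (∑ w ∈ F, pNum u v w) * 3 := by
      rw [Finset.sum_mul]
      exact Finset.sum_congr rfl (fun w hw => by rw [hF3 w hw])
    rw [hsplit, hd0, zero_mul, zero_add, e] at hsum9
    omega
  have hub : ∀ w ∈ F, pNum u v w ≤ 2 := by
    intro w hw
    have hle3 : pNum u v w ≤ 3 :=
      hsum3 ▸ Finset.single_le_sum (fun _ _ => Nat.zero_le _) hw
    have hne3 := pNum_ne_three B h3 hu hv (Finset.mem_of_mem_erase hw) hu1 hv1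
      (Finset.ne_of_mem_erase hw)
    omega
  set S := F.filter (fun w => pNum u v w ≠ 0) with hS
  have hSF : S ⊆ F := Finset.filter_subset _ _
  have hSrels : ∀ w ∈ S, w ∈ B.rels := fun w hw => Finset.mem_of_mem_erase (hSF hw)
  have hSnd : ∀ w ∈ S, w ≠ diagRel Y := fun w hw => Finset.ne_of_mem_erase (hSF hw)
  have hpos1 : ∀ w ∈ S, 1 ≤ pNum u v w := by
    intro w hw
    have := (Finset.mem_filter.mp hw).2
    omega
  have hdecomp : adjMat u * adjMat v = ∑ w ∈ S, (pNum u v w : ℂ) • adjMat w := by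
    rw [adjMat_mul_decomp B hu hv, ← Finset.add_sum_erase _ _ hdmem, hd0]
    rw [Nat.cast_zero, zero_smul, zero_add]
    refine (Finset.sum_subset hSF ?_).symm
    intro w hwF hwS
    have : pNum u v w = 0 := by
      by_contra h
      exact hwS (Finset.mem_filter.mpr ⟨hwF, h⟩)
    rw [this, Nat.cast_zero, zero_smul]
  have hSsum : ∑ w ∈ S, pNum u v w = 3 := by
    rw [hS, Finset.sum_filter_ne_zero]
    exact hsum3
  by_cases hex : ∃ w ∈ S, pNum u v w = 2
  · -- Case (ii)
    obtain ⟨w₂, hw₂S, hw₂2⟩ := hex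
    have h1sum : ∑ w ∈ S.erase w₂, pNum u v w = 1 := by
      have := Finset.add_sum_erase S (pNum u v) hw₂S
      omega
    have hcardle : (S.erase w₂).card ≤ 1 := by
      have := Finset.card_nsmul_le_sum (S.erase w₂) (pNum u v) 1
        (fun x hx => hpos1 x (Finset.mem_of_mem_erase hx))
      simpa [h1sum] using this
    have hcardne : (S.erase w₂).card ≠ 0 := by
      intro h
      rw [Finset.card_eq_zero] at h
      rw [h, Finset.sum_empty] at h1sum
      omega
    have hcard1 : (S.erase w₂).card = 1 := by omega
    obtain ⟨w₁, hw1e⟩ := Finset.card_eq_one.mp hcard1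
    have hw₁mem : w₁ ∈ S.erase w₂ := hw1e ▸ Finset.mem_singleton_self w₁
    have hne : w₁ ≠ w₂ := Finset.ne_of_mem_erase hw₁mem
    have hw₁S : w₁ ∈ S := Finset.mem_of_mem_erase hw₁mem
    have hw₁1 : pNum u v w₁ = 1 := by
      rw [hw1e, Finset.sum_singleton] at h1sum
      exact h1sum
    have hmul : adjMat u * adjMat v = adjMat w₁ + (2 : ℂ) • adjMat w₂ := by
      rw [hdecomp, ← Finset.insert_erase hw₂S, hw1e,
        Finset.sum_insert (by simp [Ne.symm hne]), Finset.sum_singleton, hw₂2, hw₁1]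
      push_cast
      rw [one_smul]
      abel
    refine Or.inr ⟨⟨w₁, w₂, ⟨hSrels w₁ hw₁S, hSnd w₁ hw₁S⟩,
      ⟨hSrels w₂ hw₂S, hSnd w₂ hw₂S⟩, hne, hmul⟩, ?_⟩
    rintro ⟨a, b, c, ⟨ha, -⟩, ⟨hb, -⟩, ⟨hc, -⟩, hab, hac, hbc, heq⟩
    exact not_both_decomp B ha hb hc (hSrels w₁ hw₁S) (hSrels w₂ hw₂S)
      hab hac hbc hne (heq.symm.trans hmul)
  · -- Case (i)
    push_neg at hex
    have hall1 : ∀ w ∈ S, pNum u v w = 1 := by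
      intro w hw
      have h1 := hpos1 w hw
      have h2 := hub w (hSF hw)
      have h3 := hex w hw
      omega
    have hcard : S.card = 3 := by
      have : ∑ w ∈ S, pNum u v w = ∑ _w ∈ S, 1 := Finset.sum_congr rfl hall1
      rw [this, Finset.sum_const, smul_eq_mul, mul_one] at hSsum
      exact hSsum
    obtain ⟨a, b, c, hab, hac, hbc, hSabc⟩ := Finset.card_eq_three.mp hcard
    have haS : a ∈ S := by rw [hSabc]; simp
    have hbS : b ∈ S := by rw [hSabc]; simp
    have hcS : c ∈ S := by rw [hSabc]; simp
    have hmul : adjMat u * adjMat v = adjMat a + adjMat b + adjMat c := by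
      rw [hdecomp, hSabc, Finset.sum_insert (by simp [hab, hac]),
        Finset.sum_insert (by simp [hbc]), Finset.sum_singleton,
        hall1 a haS, hall1 b hbS, hall1 c hcS]
      push_cast
      rw [one_smul, one_smul, one_smul, add_assoc]
    refine Or.inl ⟨⟨a, b, c, ⟨hSrels a haS, hSnd a haS⟩, ⟨hSrels b hbS, hSnd b hbS⟩,
      ⟨hSrels c hcS, hSnd c hcS⟩, hab, hac, hbc, hmul⟩, ?_⟩
    rintro ⟨d, e, ⟨hd, -⟩, ⟨he, -⟩, hde, heq⟩
    exact not_both_decomp B (hSrels a haS) (hSrels b hbS) (hSrels c hcS) hd he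
      hab hac hbc hde (hmul.symm.trans heq)

end Statements
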